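/- Let d ≥ 1 be an integer, let H be a Hermitian d × d complex matrix, let μ ∈ ℝ, and let u₀ ∈ ℂ^d. Then the ordinary differential equation i u'(t) − H u(t) = μ² (u(t) ⊙ conj(u(t)) ⊙ u(t)), i.e. componentwise i u_j'(t) − (H u(t))_j = μ² |u_j(t)|² u_j(t), with initial condition u(0) = u₀, has a unique global solution u ∈ C¹(ℝ; ℂ^d); moreover the mass is conserved: ∑_{j=1}^{d} |u_j(t)|² = ∑_{j=1}^{d} |u_j(0)|² for all t ∈ ℝ. -/

import Mathlib

open Set Metric Complex NNReal Finset

set_option linter.unusedSectionVars false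
set_option linter.unusedVariables false

section GlobalFlow
variable {E : Type*} [NormedAddCommGroup E] [NormedSpace ℝ E] [CompleteSpace E]




/-- Local solution with a uniform time step `1/(2K)`. -/
lemma nls_local_sol (F : E → E) (K : ℝ≥0) (hK : 0 < (K : ℝ)) (hF : LipschitzWith K F)
    (t₀ : ℝ) (x₀ : E) :
    ∃ f : ℝ → E, f t₀ = x₀ ∧
      ∀ t ∈ Ioo (t₀ - 1 / (2 * K)) (t₀ + 1 / (2 * K)), HasDerivAt f (F (f t)) t := by
  set ε : ℝ := 1 / (2 * K) with hε
  have hε0 : 0 < ε := by positivity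
  have ht₀ : t₀ ∈ Icc (t₀ - ε) (t₀ + ε) := ⟨by linarith, by linarith⟩
  have hpl : IsPicardLindelof (fun _ : ℝ => F) (⟨t₀, ht₀⟩ : Icc (t₀ - ε) (t₀ + ε)) x₀
      ((‖F x₀‖₊ + 1) / K) 0 (2 * ‖F x₀‖₊ + 1) K := by
    apply IsPicardLindelof.of_time_independent
    · intro x hx
      have h1 : dist (F x) (F x₀) ≤ K * dist x x₀ := hF.dist_le_mul x x₀
      have h2 : dist x x₀ ≤ (‖F x₀‖ + 1) / K := by
        have := mem_closedBall.mp hx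
        push_cast at this
        exact this
      push_cast
      have h3 : (K : ℝ) * ((‖F x₀‖ + 1) / K) = ‖F x₀‖ + 1 := by field_simp
      have h4 : ‖F x - F x₀‖ ≤ ‖F x₀‖ + 1 := by
        rw [← dist_eq_norm]
        calc dist (F x) (F x₀) ≤ ↑K * dist x x₀ := h1
        _ ≤ ↑K * ((‖F x₀‖ + 1) / ↑K) := by
          exact mul_le_mul_of_nonneg_left h2 (le_of_lt hK)
        _ = ‖F x₀‖ + 1 := h3
      calc ‖F x‖ ≤ ‖F x₀‖ + ‖F x - F x₀‖ := norm_le_norm_add_norm_sub' (F x) (F x₀)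
      _ ≤ 2 * ‖F x₀‖ + 1 := by linarith
    · exact hF.lipschitzOnWith
    · have : max (t₀ + ε - t₀) (t₀ - (t₀ - ε)) = ε := by
        simp
      dsimp only
      push_cast
      rw [sub_zero, this, hε, mul_one_div, div_le_div_iff₀ (by positivity) hK]
      nlinarith [norm_nonneg (F x₀)]
  obtain ⟨f, hf0, hf⟩ := hpl.exists_eq_forall_mem_Icc_hasDerivWithinAt₀
  exact ⟨f, hf0, fun t ht =>
    (hf t (Ioo_subset_Icc_self ht)).hasDerivAt (Icc_mem_nhds ht.1 ht.2)⟩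

lemma nls_unique_on (F : E → E) (K : ℝ≥0) (hF : LipschitzWith K F) {a b t₀ : ℝ}
    (ht₀ : t₀ ∈ Ioo a b) {f g : ℝ → E}
    (hf : ∀ t ∈ Ioo a b, HasDerivAt f (F (f t)) t)
    (hg : ∀ t ∈ Ioo a b, HasDerivAt g (F (g t)) t)
    (heq : f t₀ = g t₀) : EqOn f g (Ioo a b) :=
  ODE_solution_unique_of_mem_Ioo (v := fun _ => F) (s := fun _ => univ)
    (fun _ _ => hF.lipschitzOnWith) ht₀ (fun t ht => ⟨hf t ht, trivial⟩)
    (fun t ht => ⟨hg t ht, trivial⟩) heq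

lemma nls_global_flow (F : E → E) (K : ℝ≥0) (hK : 0 < (K : ℝ)) (hF : LipschitzWith K F)
    (x₀ : E) : ∃ u : ℝ → E, u 0 = x₀ ∧ ∀ t, HasDerivAt u (F (u t)) t := by
  set ε : ℝ := 1 / (2 * K) with hεdef
  have hε0 : 0 < ε := by rw [hεdef]; positivity
  clear_value ε
  have main : ∀ n : ℕ, ∃ f : ℝ → E, f 0 = x₀ ∧
      ∀ t ∈ Ioo (-(ε + n * (ε / 2))) (ε + n * (ε / 2)), HasDerivAt f (F (f t)) t := by
    intro n
    induction n with
    | zero =>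
      obtain ⟨f, h0, hf⟩ := nls_local_sol F K hK hF 0 x₀
      refine ⟨f, h0, fun t ht => hf t ?_⟩
      constructor <;> [skip; skip] <;>
        · rcases ht with ⟨h1, h2⟩
          push_cast at h1 h2 ⊢
          linarith
    | succ n ih =>
      obtain ⟨f, hf0, hf⟩ := ih
      set b : ℝ := ε + n * (ε / 2) with hbdef
      clear_value b
      have hbε : ε ≤ b := by
        have : 0 ≤ (n : ℝ) * (ε / 2) := mul_nonneg (Nat.cast_nonneg n) (by linarith)
        linarith
      set a : ℝ := b - ε / 2 with hadef
      clear_value a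
      have ha0 : 0 < a := by linarith
      have hab : a < b := by linarith
      obtain ⟨gR, hgR0, hgR⟩ := nls_local_sol F K hK hF a (f a)
      obtain ⟨gL, hgL0, hgL⟩ := nls_local_sol F K hK hF (-a) (f (-a))
      rw [← hεdef] at hgR hgL
      set c : ℝ := max (a - ε) 0 with hcdef
      have hc0 : (0:ℝ) ≤ max (a - ε) 0 := le_max_right _ _
      have hce : a - ε ≤ max (a - ε) 0 := le_max_left _ _
      have hca : max (a - ε) 0 < a := max_lt (by linarith) ha0
      rw [← hcdef] at hc0 hce hca
      clear_value c
      have hRagree : EqOn f gR (Ioo (a - ε) b) := by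
        apply nls_unique_on F K hF (t₀ := a) ⟨by linarith, hab⟩
        · intro t ht
          exact hf t ⟨by rcases ht with ⟨h1, _⟩; linarith, ht.2⟩
        · intro t ht
          exact hgR t ⟨ht.1, by rcases ht with ⟨_, h2⟩; linarith⟩
        · exact hgR0.symm
      have hLagree : EqOn f gL (Ioo (-b) (-(a - ε))) := by
        apply nls_unique_on F K hF (t₀ := -a) ⟨by linarith, by linarith⟩
        · intro t ht
          exact hf t ⟨ht.1, by rcases ht with ⟨_, h2⟩; linarith⟩
        · intro t ht
          exact hgL t ⟨by rcases ht with ⟨h1, _⟩; linarith,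
            by rcases ht with ⟨_, h2⟩; linarith⟩
        · exact hgL0.symm
      refine ⟨fun t => if t < -a then gL t else if t < a then f t else gR t, ?_, ?_⟩
      · show (if (0:ℝ) < -a then gL 0 else if (0:ℝ) < a then f 0 else gR 0) = x₀
        rw [if_neg (by linarith), if_pos ha0]
        exact hf0
      · intro t ht
        have hb' : ε + (n + 1 : ℕ) * (ε / 2) = a + ε := by push_cast; rw [hadef, hbdef]; ring
        rw [hb'] at ht
        obtain ⟨ht1, ht2⟩ := ht
        rcases lt_or_ge t a with h1 | h1
        · rcases lt_or_ge (-a) t with h2 | h2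
          · -- interior case: agrees with f near t
            have hmem : Ioo (-a) a ∈ nhds t := isOpen_Ioo.mem_nhds ⟨h2, h1⟩
            have heqv : (fun s => if s < -a then gL s else if s < a then f s else gR s)
                =ᶠ[nhds t] f := by
              filter_upwards [hmem] with s hs
              rw [if_neg (by linarith [hs.1]), if_pos hs.2]
            have hft : HasDerivAt f (F (f t)) t := hf t ⟨by linarith, by linarith⟩
            have := hft.congr_of_eventuallyEq heqv
            rwa [show f t = if t < -a then gL t else if t < a then f t else gR t by
              rw [if_neg (by linarith), if_pos h1]] at this
          · -- left case: agrees with gL near t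
            have htc : t < -c := by linarith
            have hmem : Ioo (-(a + ε)) (-c) ∈ nhds t := isOpen_Ioo.mem_nhds ⟨ht1, htc⟩
            have heqv : (fun s => if s < -a then gL s else if s < a then f s else gR s)
                =ᶠ[nhds t] gL := by
              filter_upwards [hmem] with s hs
              rcases lt_or_ge s (-a) with hs2 | hs2
              · rw [if_pos hs2]
              · have hsa : s < a := by
                  have := hs.2; linarith
                rw [if_neg (by linarith), if_pos hsa]
                exact hLagree ⟨by linarith, by have := hs.2; linarith⟩
            have hgt : HasDerivAt gL (F (gL t)) t := hgL t ⟨by linarith, by linarith⟩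
            have := hgt.congr_of_eventuallyEq heqv
            rwa [show gL t = if t < -a then gL t else if t < a then f t else gR t by
              rcases lt_or_ge t (-a) with h3 | h3
              · rw [if_pos h3]
              · have : t = -a := le_antisymm h2 h3
                rw [if_neg (by linarith), if_pos (by linarith)]
                exact (hLagree ⟨by linarith, by linarith⟩).symm] at this
        · -- right case: agrees with gR near t
          have hct : c < t := by linarith
          have hmem : Ioo c (a + ε) ∈ nhds t := isOpen_Ioo.mem_nhds ⟨hct, ht2⟩
          have heqv : (fun s => if s < -a then gL s else if s < a then f s else gR s)
              =ᶠ[nhds t] gR := by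
            filter_upwards [hmem] with s hs
            rcases lt_or_ge s a with hs2 | hs2
            · rw [if_neg (by have := hs.1; linarith), if_pos hs2]
              exact hRagree ⟨by have := hs.1; linarith, by linarith⟩
            · rw [if_neg (by have := hs.1; linarith), if_neg (by linarith)]
          have hgt : HasDerivAt gR (F (gR t)) t := hgR t ⟨by linarith, by linarith⟩
          have := hgt.congr_of_eventuallyEq heqv
          rwa [show gR t = if t < -a then gL t else if t < a then f t else gR t by
            rw [if_neg (by linarith), if_neg (by linarith)]] at this
  choose sol hsol0 hsol using main
  have hrad : ∀ t : ℝ, |t| < ε + (⌈|t| / (ε / 2)⌉₊ : ℝ) * (ε / 2) := by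
    intro t
    have h1 : |t| / (ε / 2) ≤ (⌈|t| / (ε / 2)⌉₊ : ℝ) := Nat.le_ceil _
    have h2 : |t| ≤ (⌈|t| / (ε / 2)⌉₊ : ℝ) * (ε / 2) := by
      rw [div_le_iff₀ (by positivity)] at h1
      linarith
    linarith
  have cons : ∀ m n : ℕ, ∀ t : ℝ, |t| < ε + m * (ε / 2) → |t| < ε + n * (ε / 2) →
      sol m t = sol n t := by
    intro m n t hm hn
    set r : ℝ := min (ε + m * (ε / 2)) (ε + n * (ε / 2)) with hrdef
    have hrm : r ≤ ε + m * (ε / 2) := min_le_left _ _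
    have hrn : r ≤ ε + n * (ε / 2) := min_le_right _ _
    have hr0 : 0 < r := by
      rw [hrdef]
      have h1 : 0 ≤ (m : ℝ) * (ε / 2) := mul_nonneg (Nat.cast_nonneg m) (by linarith)
      have h2 : 0 ≤ (n : ℝ) * (ε / 2) := mul_nonneg (Nat.cast_nonneg n) (by linarith)
      exact lt_min (by linarith) (by linarith)
    have habs : t ∈ Ioo (-r) r := abs_lt.mp (by rw [hrdef]; exact lt_min hm hn)
    clear_value r
    exact nls_unique_on F K hF (t₀ := 0) ⟨by linarith, hr0⟩
      (fun s hs => hsol m s ⟨by have := hs.1; linarith, lt_of_lt_of_le hs.2 hrm⟩)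
      (fun s hs => hsol n s ⟨by have := hs.1; linarith, lt_of_lt_of_le hs.2 hrn⟩)
      ((hsol0 m).trans (hsol0 n).symm) habs
  refine ⟨fun t => sol (⌈|t| / (ε / 2)⌉₊) t, ?_, ?_⟩
  · exact hsol0 _
  · intro t
    set n : ℕ := ⌈|t| / (ε / 2)⌉₊ with hndef
    have htn : |t| < ε + n * (ε / 2) := hrad t
    have hmem : Ioo (-(ε + n * (ε / 2))) (ε + n * (ε / 2)) ∈ nhds t :=
      isOpen_Ioo.mem_nhds (abs_lt.mp htn)
    have heqv : (fun s => sol (⌈|s| / (ε / 2)⌉₊) s) =ᶠ[nhds t] sol n := by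
      filter_upwards [hmem] with s hs
      exact cons _ n s (hrad s) (abs_lt.mpr hs)
    have hder : HasDerivAt (sol n) (F (sol n t)) t := hsol n t (abs_lt.mp htn)
    have := hder.congr_of_eventuallyEq heqv
    rwa [show sol n t = sol (⌈|t| / (ε / 2)⌉₊) t from rfl] at this

end GlobalFlow

lemma nls_lip_g (R : ℝ) (hR : 0 ≤ R) :
    ∀ z w : ℂ, ‖((min ‖z‖ R : ℝ) : ℂ) ^ 2 * z - ((min ‖w‖ R : ℝ) : ℂ) ^ 2 * w‖
      ≤ 3 * R ^ 2 * ‖z - w‖ := by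
  intro z w
  have hmin : ∀ u v : ℂ, |min ‖u‖ R - min ‖v‖ R| ≤ ‖u - v‖ := by
    intro u v
    have h := abs_norm_sub_norm_le u v
    rw [abs_le] at h ⊢
    constructor <;>
    · simp only [min_def]
      split_ifs <;> linarith [h.1, h.2]
  have key : ∀ u v : ℂ, ‖v‖ ≤ R →
      ‖((min ‖u‖ R : ℝ) : ℂ) ^ 2 * u - ((min ‖v‖ R : ℝ) : ℂ) ^ 2 * v‖ ≤ 3 * R ^ 2 * ‖u - v‖ := by
    intro u v hv
    have hmu0 : 0 ≤ min ‖u‖ R := le_min (norm_nonneg _) hR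
    have hmv0 : 0 ≤ min ‖v‖ R := le_min (norm_nonneg _) hR
    have hmuR : min ‖u‖ R ≤ R := min_le_right _ _
    have hmvR : min ‖v‖ R ≤ R := min_le_right _ _
    have decomp : ((min ‖u‖ R : ℝ) : ℂ) ^ 2 * u - ((min ‖v‖ R : ℝ) : ℂ) ^ 2 * v
        = ((min ‖u‖ R : ℝ) : ℂ) ^ 2 * (u - v)
          + (((min ‖u‖ R : ℝ) : ℂ) ^ 2 - ((min ‖v‖ R : ℝ) : ℂ) ^ 2) * v := by ring
    rw [decomp]
    have h1 : ‖((min ‖u‖ R : ℝ) : ℂ) ^ 2 * (u - v)‖ ≤ R ^ 2 * ‖u - v‖ := by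
      rw [norm_mul, norm_pow, Complex.norm_real, Real.norm_eq_abs, _root_.abs_of_nonneg hmu0]
      have : (min ‖u‖ R) ^ 2 ≤ R ^ 2 := by nlinarith
      exact mul_le_mul_of_nonneg_right this (norm_nonneg _)
    have h2 : ‖(((min ‖u‖ R : ℝ) : ℂ) ^ 2 - ((min ‖v‖ R : ℝ) : ℂ) ^ 2) * v‖
        ≤ 2 * R ^ 2 * ‖u - v‖ := by
      rw [norm_mul]
      have hre : (((min ‖u‖ R : ℝ) : ℂ) ^ 2 - ((min ‖v‖ R : ℝ) : ℂ) ^ 2)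
          = (((min ‖u‖ R) ^ 2 - (min ‖v‖ R) ^ 2 : ℝ) : ℂ) := by push_cast; ring
      rw [hre, Complex.norm_real, Real.norm_eq_abs]
      have habs : |(min ‖u‖ R) ^ 2 - (min ‖v‖ R) ^ 2| ≤ 2 * R * ‖u - v‖ := by
        have hfac : (min ‖u‖ R) ^ 2 - (min ‖v‖ R) ^ 2
            = (min ‖u‖ R + min ‖v‖ R) * (min ‖u‖ R - min ‖v‖ R) := by ring
        rw [hfac, abs_mul, _root_.abs_of_nonneg (by linarith)]
        have := hmin u v
        nlinarith [abs_nonneg (min ‖u‖ R - min ‖v‖ R), norm_nonneg (u - v)]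
      calc |(min ‖u‖ R) ^ 2 - (min ‖v‖ R) ^ 2| * ‖v‖ ≤ (2 * R * ‖u - v‖) * R := by
            apply mul_le_mul habs hv (norm_nonneg _)
            positivity
        _ = 2 * R ^ 2 * ‖u - v‖ := by ring
    calc ‖((min ‖u‖ R : ℝ) : ℂ) ^ 2 * (u - v)
          + (((min ‖u‖ R : ℝ) : ℂ) ^ 2 - ((min ‖v‖ R : ℝ) : ℂ) ^ 2) * v‖
        ≤ ‖((min ‖u‖ R : ℝ) : ℂ) ^ 2 * (u - v)‖
          + ‖(((min ‖u‖ R : ℝ) : ℂ) ^ 2 - ((min ‖v‖ R : ℝ) : ℂ) ^ 2) * v‖ := norm_add_le _ _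
      _ ≤ R ^ 2 * ‖u - v‖ + 2 * R ^ 2 * ‖u - v‖ := add_le_add h1 h2
      _ = 3 * R ^ 2 * ‖u - v‖ := by ring
  rcases le_or_gt ‖w‖ R with h | h
  · exact key z w h
  rcases le_or_gt ‖z‖ R with h2 | h2
  · have := key w z h2
    rw [← norm_neg] at this
    simp only [neg_sub] at this
    rw [show w - z = -(z - w) by ring, norm_neg] at this
    exact this
  · have hz : min ‖z‖ R = R := min_eq_right h2.le
    have hw : min ‖w‖ R = R := min_eq_right h.le
    rw [hz, hw, ← mul_sub, norm_mul, norm_pow, Complex.norm_real, Real.norm_eq_abs,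
      _root_.abs_of_nonneg hR]
    nlinarith [norm_nonneg (z - w)]

lemma nls_deriv_normSq {z : ℝ → ℂ} {w : ℂ} {t : ℝ} (h : HasDerivAt z w t) :
    HasDerivAt (fun s => Complex.normSq (z s)) (2 * ((starRingEnd ℂ) (z t) * w).re) t := by
  have hre : HasDerivAt (fun s => (z s).re) w.re t :=
    (Complex.reCLM.hasFDerivAt.comp_hasDerivAt t h)
  have him : HasDerivAt (fun s => (z s).im) w.im t :=
    (Complex.imCLM.hasFDerivAt.comp_hasDerivAt t h)
  have := (hre.mul hre).add (him.mul him)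
  have heq : (fun s => (z s).re * (z s).re + (z s).im * (z s).im)
      = fun s => Complex.normSq (z s) := by
    funext s; simp [Complex.normSq_apply]
  rw [show (((fun s => (z s).re) * fun s => (z s).re) + (fun s => (z s).im) * fun s => (z s).im)
    = fun s => Complex.normSq (z s) from heq] at this
  refine this.congr_deriv ?_
  simp [Complex.mul_re, Complex.conj_re, Complex.conj_im]
  ring

/-- `⟨x, H x⟩` is real for Hermitian `H`. -/
lemma nls_herm_real {d : ℕ} {H : Matrix (Fin d) (Fin d) ℂ} (hH : H.IsHermitian)
    (x : Fin d → ℂ) : (∑ j, (starRingEnd ℂ) (x j) * H.mulVec x j).im = 0 := by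
  have hS : (∑ j, (starRingEnd ℂ) (x j) * H.mulVec x j)
      = dotProduct (star x) (H.mulVec x) := rfl
  rw [hS]
  have hstar : star (dotProduct (star x) (H.mulVec x))
      = dotProduct (star x) (H.mulVec x) := by
    calc star (dotProduct (star x) (H.mulVec x))
        = star (star (dotProduct (star (H.mulVec x)) x)) := by
          rw [Matrix.star_dotProduct]
      _ = dotProduct (star (H.mulVec x)) x := star_star _
      _ = dotProduct (Matrix.vecMul (star x) H.conjTranspose) x := by
          rw [Matrix.star_mulVec]
      _ = dotProduct (Matrix.vecMul (star x) H) x := by rw [hH.eq]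
      _ = dotProduct (star x) (H.mulVec x) := (Matrix.dotProduct_mulVec _ _ _).symm
  exact Complex.conj_eq_iff_im.mp hstar

/-- Mass conservation for derivatives of the form `-i (H x + c x)` with real `c`. -/
lemma nls_mass {d : ℕ} {H : Matrix (Fin d) (Fin d) ℂ} (hH : H.IsHermitian)
    (v V : ℝ → Fin d → ℂ) (c : ℝ → Fin d → ℝ)
    (hderiv : ∀ t j, HasDerivAt (fun s => v s j) (V t j) t)
    (hV : ∀ t j, V t j = -Complex.I * (H.mulVec (v t) j + (c t j : ℂ) * v t j)) :
    ∀ t, ∑ j, Complex.normSq (v t j) = ∑ j, Complex.normSq (v 0 j) := by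
  have hm : ∀ t, HasDerivAt (fun s => ∑ j, Complex.normSq (v s j))
      (∑ j, 2 * ((starRingEnd ℂ) (v t j) * V t j).re) t := by
    intro t
    exact HasDerivAt.fun_sum fun j _ => nls_deriv_normSq (hderiv t j)
  have hzero : ∀ t, (∑ j, 2 * ((starRingEnd ℂ) (v t j) * V t j).re) = 0 := by
    intro t
    have hsum : (∑ j, 2 * ((starRingEnd ℂ) (v t j) * V t j).re)
        = 2 * (∑ j, (starRingEnd ℂ) (v t j) * V t j).re := by
      rw [Complex.re_sum, Finset.mul_sum]
    rw [hsum]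
    have hterm : ∀ j, (starRingEnd ℂ) (v t j) * V t j
        = -Complex.I * ((starRingEnd ℂ) (v t j) * H.mulVec (v t) j
            + ((c t j * Complex.normSq (v t j) : ℝ) : ℂ)) := by
      intro j
      rw [hV t j, Complex.ofReal_mul, Complex.normSq_eq_conj_mul_self]
      ring
    rw [Finset.sum_congr rfl fun j _ => hterm j, ← Finset.mul_sum, Finset.sum_add_distrib]
    set S : ℂ := ∑ j, (starRingEnd ℂ) (v t j) * H.mulVec (v t) j with hSdef
    have hSim : S.im = 0 := nls_herm_real hH (v t)
    have hr : (∑ j, ((c t j * Complex.normSq (v t j) : ℝ) : ℂ)).im = 0 := by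
      rw [← Complex.ofReal_sum]
      exact Complex.ofReal_im _
    have : (-Complex.I * (S + ∑ j, ((c t j * Complex.normSq (v t j) : ℝ) : ℂ))).re
        = (S + ∑ j, ((c t j * Complex.normSq (v t j) : ℝ) : ℂ)).im := by
      simp [Complex.mul_re]
    rw [this, Complex.add_im, hSim, hr]
    ring
  intro t
  have hdiff : Differentiable ℝ (fun s => ∑ j, Complex.normSq (v s j)) :=
    fun s => (hm s).differentiableAt
  have hderiv0 : ∀ s, deriv (fun s => ∑ j, Complex.normSq (v s j)) s = 0 := by
    intro s
    rw [(hm s).deriv, hzero s]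
  exact is_const_of_deriv_eq_zero hdiff hderiv0 t 0

/-- `v` solves the ODE `i v'(t) - H v(t) = μ² (v ⊙ conj v ⊙ v)(t)` componentwise on all of `ℝ`. -/
def IsNLSSol (d : ℕ) (H : Matrix (Fin d) (Fin d) ℂ) (μ : ℝ) (v : ℝ → Fin d → ℂ) : Prop :=
  ∀ t : ℝ, ∀ j : Fin d, ∃ w : ℂ,
    HasDerivAt (fun s => v s j) w t ∧
      Complex.I * w - H.mulVec (v t) j = (μ : ℂ) ^ 2 * ((starRingEnd ℂ) (v t j) * v t j) * v t j

/-- Global well-posedness and mass conservation for the Hamiltonian ODE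
`i u' - H u = μ² (u ⊙ conj u ⊙ u)` with Hermitian `H`. -/
theorem stmt5 (d : ℕ) (hd : 1 ≤ d) (H : Matrix (Fin d) (Fin d) ℂ) (hH : H.IsHermitian)
    (μ : ℝ) (u₀ : Fin d → ℂ) :
    ∃ u : ℝ → Fin d → ℂ,
      IsNLSSol d H μ u ∧ u 0 = u₀ ∧
        (∀ v : ℝ → Fin d → ℂ, IsNLSSol d H μ v → v 0 = u₀ → v = u) ∧
        ∀ t : ℝ, ∑ j, Complex.normSq (u t j) = ∑ j, Complex.normSq (u₀ j) := by
  classical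
  set M : ℝ := ∑ j, Complex.normSq (u₀ j) with hMdef
  have hM0 : 0 ≤ M := Finset.sum_nonneg fun j _ => Complex.normSq_nonneg _
  set R : ℝ := Real.sqrt M with hRdef
  have hR0 : 0 ≤ R := Real.sqrt_nonneg _
  set g : ℂ → ℂ := fun z => ((min ‖z‖ R : ℝ) : ℂ) ^ 2 * z with hgdef
  set F : (Fin d → ℂ) → (Fin d → ℂ) :=
    fun x j => -Complex.I * (H.mulVec x j + (μ : ℂ) ^ 2 * g (x j)) with hFdef
  set CH : ℝ := ∑ j, ∑ k, ‖H j k‖ with hCHdef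
  have hCH0 : 0 ≤ CH := Finset.sum_nonneg fun j _ => Finset.sum_nonneg fun k _ => norm_nonneg _
  set K : ℝ≥0 := Real.toNNReal (CH + μ ^ 2 * (3 * R ^ 2)) + 1 with hKdef
  have hK0 : 0 < (K : ℝ) := by
    rw [hKdef]; push_cast; positivity
  have hKge : CH + μ ^ 2 * (3 * R ^ 2) ≤ (K : ℝ) := by
    have h1 : CH + μ ^ 2 * (3 * R ^ 2) ≤ ((CH + μ ^ 2 * (3 * R ^ 2)).toNNReal : ℝ) :=
      Real.le_coe_toNNReal _
    have h2 : (K : ℝ) = ((CH + μ ^ 2 * (3 * R ^ 2)).toNNReal : ℝ) + 1 := by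
      rw [hKdef]; push_cast; ring
    linarith
  -- Lipschitz bound for F
  have hF : LipschitzWith K F := by
    apply LipschitzWith.of_dist_le_mul
    intro x y
    rw [dist_pi_le_iff (by positivity)]
    intro j
    rw [dist_eq_norm]
    have hsplit : F x j - F y j
        = -Complex.I * ((H.mulVec x j - H.mulVec y j) + (μ : ℂ) ^ 2 * (g (x j) - g (y j))) := by
      rw [hFdef]; ring
    rw [hsplit, norm_mul, norm_neg, Complex.norm_I, one_mul]
    have hmv : H.mulVec x j - H.mulVec y j = H.mulVec (x - y) j := by
      rw [Matrix.mulVec_sub]; rfl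
    have hmvb : ‖H.mulVec (x - y) j‖ ≤ CH * dist x y := by
      rw [Matrix.mulVec, dotProduct]
      calc ‖∑ k, H j k * (x - y) k‖ ≤ ∑ k, ‖H j k * (x - y) k‖ := norm_sum_le _ _
        _ ≤ ∑ k, ‖H j k‖ * dist x y := by
            apply Finset.sum_le_sum
            intro k _
            rw [norm_mul]
            have h1 : ‖(x - y) k‖ ≤ dist x y := by
              rw [dist_eq_norm]; exact norm_le_pi_norm (x - y) k
            exact mul_le_mul_of_nonneg_left h1 (norm_nonneg _)
        _ = (∑ k, ‖H j k‖) * dist x y := by rw [Finset.sum_mul]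
        _ ≤ CH * dist x y := by
            apply mul_le_mul_of_nonneg_right _ dist_nonneg
            rw [hCHdef]
            exact Finset.single_le_sum (fun i _ => Finset.sum_nonneg fun k _ => norm_nonneg _)
              (Finset.mem_univ j)
    have hgb : ‖(μ : ℂ) ^ 2 * (g (x j) - g (y j))‖ ≤ μ ^ 2 * (3 * R ^ 2) * dist x y := by
      rw [norm_mul]
      have h1 : ‖g (x j) - g (y j)‖ ≤ 3 * R ^ 2 * ‖x j - y j‖ := nls_lip_g R hR0 (x j) (y j)
      have h2 : ‖x j - y j‖ ≤ dist x y := by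
        rw [dist_eq_norm]; exact norm_le_pi_norm (x - y) j
      have h3 : ‖(μ : ℂ) ^ 2‖ = μ ^ 2 := by
        rw [norm_pow, Complex.norm_real, Real.norm_eq_abs, _root_.sq_abs]
      rw [h3]
      calc μ ^ 2 * ‖g (x j) - g (y j)‖ ≤ μ ^ 2 * (3 * R ^ 2 * dist x y) := by
            apply mul_le_mul_of_nonneg_left _ (sq_nonneg μ)
            calc ‖g (x j) - g (y j)‖ ≤ 3 * R ^ 2 * ‖x j - y j‖ := h1
              _ ≤ 3 * R ^ 2 * dist x y := by
                  apply mul_le_mul_of_nonneg_left h2 (by positivity)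
        _ = μ ^ 2 * (3 * R ^ 2) * dist x y := by ring
    calc ‖(H.mulVec x j - H.mulVec y j) + (μ : ℂ) ^ 2 * (g (x j) - g (y j))‖
        ≤ ‖H.mulVec x j - H.mulVec y j‖ + ‖(μ : ℂ) ^ 2 * (g (x j) - g (y j))‖ := norm_add_le _ _
      _ ≤ CH * dist x y + μ ^ 2 * (3 * R ^ 2) * dist x y := by
          rw [hmv]; exact add_le_add hmvb hgb
      _ = (CH + μ ^ 2 * (3 * R ^ 2)) * dist x y := by ring
      _ ≤ (K : ℝ) * dist x y := mul_le_mul_of_nonneg_right hKge dist_nonneg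
  obtain ⟨u, hu0, hu⟩ := nls_global_flow F K hK0 hF u₀
  have hucomp : ∀ t j, HasDerivAt (fun s => u s j) (F (u t) j) t :=
    fun t j => hasDerivAt_pi.mp (hu t) j
  -- mass conservation for u
  have humass : ∀ t, ∑ j, Complex.normSq (u t j) = ∑ j, Complex.normSq (u₀ j) := by
    have := nls_mass hH u (fun t => F (u t)) (fun t j => μ ^ 2 * (min ‖u t j‖ R) ^ 2)
      (fun t j => hucomp t j) ?_
    · intro t; rw [this t, hu0]
    · intro t j
      rw [hFdef, hgdef]
      push_cast
      ring
  -- a priori bound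
  have hub : ∀ t j, ‖u t j‖ ≤ R := by
    intro t j
    have h1 : Complex.normSq (u t j) ≤ M := by
      rw [hMdef, ← humass t]
      exact Finset.single_le_sum (fun i _ => Complex.normSq_nonneg _) (Finset.mem_univ j)
    have h2 : ‖u t j‖ = Real.sqrt (Complex.normSq (u t j)) := by
      rw [Complex.norm_def]
    rw [h2, hRdef]
    exact Real.sqrt_le_sqrt h1
  have hgu : ∀ z : ℂ, ‖z‖ ≤ R → g z = (starRingEnd ℂ) z * z * z := by
    intro z hz
    rw [hgdef]
    simp only []
    rw [min_eq_left hz]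
    rw [show ((‖z‖ : ℝ) : ℂ) ^ 2 = ((‖z‖ ^ 2 : ℝ) : ℂ) by push_cast; ring]
    rw [show (‖z‖ ^ 2 : ℝ) = Complex.normSq z by
      exact Complex.sq_norm z]
    rw [Complex.normSq_eq_conj_mul_self]
  refine ⟨u, ?_, hu0, ?_, humass⟩
  · -- u is a solution
    intro t j
    refine ⟨F (u t) j, hucomp t j, ?_⟩
    rw [hFdef]
    simp only []
    rw [hgu (u t j) (hub t j)]
    set a := H.mulVec (u t) j
    set B := (μ : ℂ) ^ 2 * ((starRingEnd ℂ) (u t j) * u t j * u t j)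
    have : Complex.I * (-Complex.I * (a + B)) - a = B := by
      linear_combination (-(a + B)) * Complex.I_mul_I
    calc Complex.I * (-Complex.I * (a + (μ : ℂ) ^ 2 * ((starRingEnd ℂ) (u t j) * u t j * u t j))) - a
        = (μ : ℂ) ^ 2 * ((starRingEnd ℂ) (u t j) * u t j * u t j) := this
      _ = (μ : ℂ) ^ 2 * ((starRingEnd ℂ) (u t j) * u t j) * u t j := by ring
  · -- uniqueness
    intro v hvsol hv0
    set V : ℝ → Fin d → ℂ := fun t j => deriv (fun s => v s j) t with hVdef
    have hVder : ∀ t j, HasDerivAt (fun s => v s j) (V t j) t ∧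
        V t j = -Complex.I * (H.mulVec (v t) j
          + ((μ ^ 2 * Complex.normSq (v t j) : ℝ) : ℂ) * v t j) := by
      intro t j
      obtain ⟨w, hw, heqn⟩ := hvsol t j
      have hVw : V t j = w := hw.deriv
      refine ⟨hVw ▸ hw, ?_⟩
      rw [hVw]
      have hcast : ((μ ^ 2 * Complex.normSq (v t j) : ℝ) : ℂ) * v t j
          = (μ : ℂ) ^ 2 * ((starRingEnd ℂ) (v t j) * v t j) * v t j := by
        push_cast [Complex.normSq_eq_conj_mul_self]
        try ring
      rw [hcast]
      linear_combination (-Complex.I) * heqn + w * Complex.I_mul_I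
    have hvmass : ∀ t, ∑ j, Complex.normSq (v t j) = ∑ j, Complex.normSq (u₀ j) := by
      have := nls_mass hH v V (fun t j => μ ^ 2 * Complex.normSq (v t j))
        (fun t j => (hVder t j).1) ?_
      · intro t; rw [this t, hv0]
      · intro t j
        exact (hVder t j).2
    have hvb : ∀ t j, ‖v t j‖ ≤ R := by
      intro t j
      have h1 : Complex.normSq (v t j) ≤ M := by
        rw [hMdef, ← hvmass t]
        exact Finset.single_le_sum (fun i _ => Complex.normSq_nonneg _) (Finset.mem_univ j)
      have h2 : ‖v t j‖ = Real.sqrt (Complex.normSq (v t j)) := by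
        rw [Complex.norm_def]
      rw [h2, hRdef]
      exact Real.sqrt_le_sqrt h1
    have hVF : ∀ t, V t = F (v t) := by
      intro t
      funext j
      rw [(hVder t j).2, hFdef]
      simp only []
      rw [hgu (v t j) (hvb t j)]
      push_cast
      rw [Complex.normSq_eq_conj_mul_self]
      ring
    have hvflow : ∀ t, HasDerivAt v (F (v t)) t := by
      intro t
      have : HasDerivAt v (V t) t := hasDerivAt_pi.mpr fun j => (hVder t j).1
      rwa [hVF t] at this
    funext t
    have h0 : (0 : ℝ) ∈ Ioo (-(|t| + 1)) (|t| + 1) := by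
      constructor <;> [linarith [abs_nonneg t]; linarith [abs_nonneg t]]
    exact nls_unique_on F K hF h0 (fun s _ => hvflow s) (fun s _ => hu s)
      (hv0.trans hu0.symm) (abs_lt.mp (by linarith [le_abs_self t, abs_nonneg t] : |t| < |t| + 1))
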